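/- For the Leslie–Gower competition map with C₁₂ = C₂₁ = 0, the Jacobian matrix of the map evaluated at any equilibrium (X, h(X)) with X ∈ [0, K₁] has eigenvalues λ₁(X) = (1 + r₁(1 − X/K₁) + (X/K₁)r₂)/((1+r₁)(1+r₂)) ∈ (0,1) and λ₂(X) = 1. -/

import Mathlib

noncomputable def F (r₁ K₁ α₁ X Y : ℝ) : ℝ := (1 + r₁) * X / (1 + r₁ / K₁ * X + α₁ * Y)
noncomputable def G (r₂ K₂ α₂ X Y : ℝ) : ℝ := (1 + r₂) * Y / (1 + r₂ / K₂ * Y + α₂ * X)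
noncomputable def h (r₁ K₁ α₁ X : ℝ) : ℝ := r₁ / (α₁ * K₁) * (K₁ - X)
noncomputable def k (r₂ K₂ α₂ X : ℝ) : ℝ := K₂ / r₂ * (r₂ - α₂ * X)
noncomputable def T (r₁ r₂ K₁ K₂ α₁ α₂ : ℝ) (p : ℝ × ℝ) : ℝ × ℝ :=
  (F r₁ K₁ α₁ p.1 p.2, G r₂ K₂ α₂ p.1 p.2)

lemma fderiv_rat1 (c a b x y : ℝ) (hd : 1 + a*x + b*y ≠ 0) (v : ℝ × ℝ) :
    fderiv ℝ (fun p : ℝ × ℝ => c * p.1 / (1 + a * p.1 + b * p.2)) (x, y) v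
      = (c * v.1 * (1 + a*x + b*y) - c * x * (a * v.1 + b * v.2)) / (1 + a*x + b*y)^2 := by
  have hnum : HasFDerivAt (fun p : ℝ × ℝ => c * p.1)
      (c • ContinuousLinearMap.fst ℝ ℝ ℝ) (x, y) := (hasFDerivAt_fst).const_mul c
  have hden : HasFDerivAt (fun p : ℝ × ℝ => 1 + a * p.1 + b * p.2)
      (a • ContinuousLinearMap.fst ℝ ℝ ℝ + b • ContinuousLinearMap.snd ℝ ℝ ℝ) (x, y) := by
    have h1 : HasFDerivAt (fun p : ℝ × ℝ => a * p.1)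
        (a • ContinuousLinearMap.fst ℝ ℝ ℝ) (x, y) := (hasFDerivAt_fst).const_mul a
    have h2 : HasFDerivAt (fun p : ℝ × ℝ => b * p.2)
        (b • ContinuousLinearMap.snd ℝ ℝ ℝ) (x, y) := (hasFDerivAt_snd).const_mul b
    exact (h1.const_add 1).add h2
  have hinv := (hasFDerivAt_inv' (𝕜 := ℝ) hd).comp (x, y) hden
  have hF := hnum.mul hinv
  simp only [Function.comp_def] at hF
  simp only [div_eq_mul_inv]
  rw [show (fun p : ℝ × ℝ => c * p.1 * (1 + a * p.1 + b * p.2)⁻¹)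
    = (fun p : ℝ × ℝ => c * p.1) * (fun p : ℝ × ℝ => (1 + a * p.1 + b * p.2)⁻¹) from rfl,
    hF.fderiv]
  simp [ContinuousLinearMap.smul_apply, ContinuousLinearMap.sub_apply,
    ContinuousLinearMap.add_apply, ContinuousLinearMap.comp_apply, smul_eq_mul,
    ContinuousLinearMap.mulLeftRight_apply]
  field_simp
  ring

lemma fderiv_rat2 (c a b x y : ℝ) (hd : 1 + a*y + b*x ≠ 0) (v : ℝ × ℝ) :
    fderiv ℝ (fun p : ℝ × ℝ => c * p.2 / (1 + a * p.2 + b * p.1)) (x, y) v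
      = (c * v.2 * (1 + a*y + b*x) - c * y * (a * v.2 + b * v.1)) / (1 + a*y + b*x)^2 := by
  have hnum : HasFDerivAt (fun p : ℝ × ℝ => c * p.2)
      (c • ContinuousLinearMap.snd ℝ ℝ ℝ) (x, y) := (hasFDerivAt_snd).const_mul c
  have hden : HasFDerivAt (fun p : ℝ × ℝ => 1 + a * p.2 + b * p.1)
      (a • ContinuousLinearMap.snd ℝ ℝ ℝ + b • ContinuousLinearMap.fst ℝ ℝ ℝ) (x, y) := by
    have h1 : HasFDerivAt (fun p : ℝ × ℝ => a * p.2)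
        (a • ContinuousLinearMap.snd ℝ ℝ ℝ) (x, y) := (hasFDerivAt_snd).const_mul a
    have h2 : HasFDerivAt (fun p : ℝ × ℝ => b * p.1)
        (b • ContinuousLinearMap.fst ℝ ℝ ℝ) (x, y) := (hasFDerivAt_fst).const_mul b
    exact (h1.const_add 1).add h2
  have hinv := (hasFDerivAt_inv' (𝕜 := ℝ) hd).comp (x, y) hden
  have hF := hnum.mul hinv
  simp only [Function.comp_def] at hF
  simp only [div_eq_mul_inv]
  rw [show (fun p : ℝ × ℝ => c * p.2 * (1 + a * p.2 + b * p.1)⁻¹)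
    = (fun p : ℝ × ℝ => c * p.2) * (fun p : ℝ × ℝ => (1 + a * p.2 + b * p.1)⁻¹) from rfl,
    hF.fderiv]
  simp [ContinuousLinearMap.smul_apply, ContinuousLinearMap.sub_apply,
    ContinuousLinearMap.add_apply, ContinuousLinearMap.comp_apply, smul_eq_mul,
    ContinuousLinearMap.mulLeftRight_apply]
  field_simp
  ring

set_option maxHeartbeats 1000000 in
theorem stmt18 (r₁ r₂ K₁ K₂ α₁ α₂ : ℝ)
    (hr₁ : 0 < r₁) (hr₂ : 0 < r₂) (hK₁ : 0 < K₁) (hK₂ : 0 < K₂)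
    (hα₁ : 0 < α₁) (hα₂ : 0 < α₂)
    (hc1 : r₁ / α₁ = K₂) (hc2 : r₂ / α₂ = K₁)
    (X : ℝ) (hX : X ∈ Set.Icc 0 K₁)
    (J : Matrix (Fin 2) (Fin 2) ℝ)
    (hJ : J = !![fderiv ℝ (fun p : ℝ × ℝ => F r₁ K₁ α₁ p.1 p.2) (X, h r₁ K₁ α₁ X) (1, 0),
                 fderiv ℝ (fun p : ℝ × ℝ => F r₁ K₁ α₁ p.1 p.2) (X, h r₁ K₁ α₁ X) (0, 1);
                 fderiv ℝ (fun p : ℝ × ℝ => G r₂ K₂ α₂ p.1 p.2) (X, h r₁ K₁ α₁ X) (1, 0),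
                 fderiv ℝ (fun p : ℝ × ℝ => G r₂ K₂ α₂ p.1 p.2) (X, h r₁ K₁ α₁ X) (0, 1)])
    (lam1 : ℝ)
    (hlam1 : lam1 = (1 + r₁ * (1 - X / K₁) + (X / K₁) * r₂) / ((1 + r₁) * (1 + r₂))) :
    J.charpoly = (Polynomial.X - Polynomial.C lam1) * (Polynomial.X - Polynomial.C 1) ∧
      0 < lam1 ∧ lam1 < 1 := by
  obtain ⟨hX0, hX1⟩ := hX
  have hK₁' : K₁ ≠ 0 := ne_of_gt hK₁
  have hα₁' : α₁ ≠ 0 := ne_of_gt hα₁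
  have hα₂' : α₂ ≠ 0 := ne_of_gt hα₂
  have hr₁' : r₁ ≠ 0 := ne_of_gt hr₁
  have hr₂' : r₂ ≠ 0 := ne_of_gt hr₂
  have hY : h r₁ K₁ α₁ X = r₁ / (α₁ * K₁) * (K₁ - X) := rfl
  have hd1 : 1 + r₁ / K₁ * X + α₁ * h r₁ K₁ α₁ X = 1 + r₁ := by
    rw [hY]; field_simp; ring
  have hd2 : 1 + r₂ / K₂ * h r₁ K₁ α₁ X + α₂ * X = 1 + r₂ := by
    rw [hY, ← hc1, ← hc2]; field_simp; ring
  have h1pos : (0:ℝ) < 1 + r₁ := by linarith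
  have h2pos : (0:ℝ) < 1 + r₂ := by linarith
  have hd1' : 1 + r₁ / K₁ * X + α₁ * h r₁ K₁ α₁ X ≠ 0 := by rw [hd1]; positivity
  have hd2' : 1 + r₂ / K₂ * h r₁ K₁ α₁ X + α₂ * X ≠ 0 := by rw [hd2]; positivity
  have hF10 := fderiv_rat1 (1 + r₁) (r₁ / K₁) α₁ X (h r₁ K₁ α₁ X) hd1' (1, 0)
  have hF01 := fderiv_rat1 (1 + r₁) (r₁ / K₁) α₁ X (h r₁ K₁ α₁ X) hd1' (0, 1)
  have hG10 := fderiv_rat2 (1 + r₂) (r₂ / K₂) α₂ X (h r₁ K₁ α₁ X) hd2' (1, 0)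
  have hG01 := fderiv_rat2 (1 + r₂) (r₂ / K₂) α₂ X (h r₁ K₁ α₁ X) hd2' (0, 1)
  have hFfun : (fun p : ℝ × ℝ => F r₁ K₁ α₁ p.1 p.2)
      = fun p : ℝ × ℝ => (1 + r₁) * p.1 / (1 + r₁ / K₁ * p.1 + α₁ * p.2) := rfl
  have hGfun : (fun p : ℝ × ℝ => G r₂ K₂ α₂ p.1 p.2)
      = fun p : ℝ × ℝ => (1 + r₂) * p.2 / (1 + r₂ / K₂ * p.2 + α₂ * p.1) := rfl
  rw [hFfun, hGfun] at hJ
  rw [hF10, hF01, hG10, hG01] at hJ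
  simp only [hd1, hd2] at hJ
  have hJ00 : J 0 0 = (1 + r₁ - r₁ / K₁ * X) / (1 + r₁) := by
    rw [hJ]; simp [Matrix.cons_val_zero]
    field_simp
  have hJ01 : J 0 1 = -(α₁ * X) / (1 + r₁) := by
    rw [hJ]; simp [Matrix.cons_val_zero, Matrix.cons_val_one]
    field_simp
  have hJ10 : J 1 0 = -(α₂ * h r₁ K₁ α₁ X) / (1 + r₂) := by
    rw [hJ]; simp [Matrix.cons_val_zero, Matrix.cons_val_one]
    field_simp
  have hJ11 : J 1 1 = (1 + r₂ - r₂ / K₂ * h r₁ K₁ α₁ X) / (1 + r₂) := by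
    rw [hJ]; simp [Matrix.cons_val_zero, Matrix.cons_val_one]
    field_simp
  have htr : J.trace = lam1 + 1 := by
    rw [Matrix.trace_fin_two, hJ00, hJ11, hlam1, ← hc1, ← hc2]
    simp only [h]
    field_simp
    ring
  have hdet : J.det = lam1 := by
    rw [Matrix.det_fin_two, hJ00, hJ01, hJ10, hJ11, hlam1, ← hc1, ← hc2]
    simp only [h]
    field_simp
    ring
  refine ⟨?_, ?_, ?_⟩
  · have key : ∀ a b c d t de : ℝ, a + d = t → a * d - b * c = de →
        (Polynomial.X - Polynomial.C a) * (Polynomial.X - Polynomial.C d)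
          - (-Polynomial.C b) * (-Polynomial.C c)
        = Polynomial.X ^ 2 - Polynomial.C t * Polynomial.X + Polynomial.C de := by
      intro a b c d t de h1 h2
      rw [← h1, ← h2, map_add, map_sub, map_mul, map_mul]
      ring
    rw [Matrix.charpoly, Matrix.det_fin_two,
      Matrix.charmatrix_apply_eq, Matrix.charmatrix_apply_eq,
      Matrix.charmatrix_apply_ne _ _ _ (by decide), Matrix.charmatrix_apply_ne _ _ _ (by decide),
      key (J 0 0) (J 0 1) (J 1 0) (J 1 1) (lam1 + 1) lam1
        (by have := htr; rwa [Matrix.trace_fin_two] at this)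
        (by have := hdet; rwa [Matrix.det_fin_two] at this),
      map_add, Polynomial.C_1]
    ring
  · rw [hlam1]
    have h1 : 0 ≤ X / K₁ := by positivity
    have h2 : X / K₁ ≤ 1 := by rw [div_le_one hK₁]; exact hX1
    have hnum : 0 < 1 + r₁ * (1 - X / K₁) + X / K₁ * r₂ := by nlinarith
    positivity
  · rw [hlam1, div_lt_one (by positivity)]
    have h1 : 0 ≤ X / K₁ := by positivity
    have h2 : X / K₁ ≤ 1 := by rw [div_le_one hK₁]; exact hX1
    nlinarith
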